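/- If the multiplication group Mult(L) of a loop L is a nilpotent group of class n, then L is centrally nilpotent of class at most n. -/

import Mathlib

open Pointwise

/-- A loop: a binary system with identity in which left and right
translations are uniquely invertible. -/
class LoopStr (L : Type*) extends Mul L, One L where
  one_mul : ∀ a : L, 1 * a = a
  mul_one : ∀ a : L, a * 1 = a
  existsUnique_ldiv : ∀ a b : L, ∃! y, a * y = b
  existsUnique_rdiv : ∀ a b : L, ∃! x, x * a = b

variable {L : Type*} [LoopStr L]

/-- The left translation `λ_a : y ↦ a * y` as a permutation of `L`. -/
noncomputable def leftT (a : L) : Equiv.Perm L :=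
  Equiv.ofBijective (fun y => a * y)
    ⟨fun y₁ y₂ h => by
      obtain ⟨y, -, hu⟩ := LoopStr.existsUnique_ldiv a (a * y₂)
      exact (hu y₁ h).trans (hu y₂ rfl).symm,
     fun b => (LoopStr.existsUnique_ldiv a b).exists⟩

/-- The right translation `ρ_a : y ↦ y * a` as a permutation of `L`. -/
noncomputable def rightT (a : L) : Equiv.Perm L :=
  Equiv.ofBijective (fun y => y * a)
    ⟨fun y₁ y₂ h => by
      obtain ⟨y, -, hu⟩ := LoopStr.existsUnique_rdiv a (y₂ * a)
      exact (hu y₁ h).trans (hu y₂ rfl).symm,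
     fun b => (LoopStr.existsUnique_rdiv a b).exists⟩

/-- The multiplication group `Mult(L)`: the subgroup of `Perm L` generated by
all left and right translations. -/
noncomputable def MultL (L : Type*) [LoopStr L] : Subgroup (Equiv.Perm L) :=
  Subgroup.closure {f | ∃ a : L, f = leftT a ∨ f = rightT a}

/-- The inner mapping group `Inn(L)`: the stabilizer of the identity in `Mult(L)`. -/
noncomputable def InnL (L : Type*) [LoopStr L] : Subgroup (Equiv.Perm L) :=
  MultL L ⊓ MulAction.stabilizer (Equiv.Perm L) (1 : L)

/-- Left division: the unique `y` with `a * y = b`. -/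
noncomputable def ldivL (a b : L) : L := (LoopStr.existsUnique_ldiv a b).choose

/-- Right division: the unique `x` with `x * a = b`. -/
noncomputable def rdivL (b a : L) : L := (LoopStr.existsUnique_rdiv a b).choose

/-- A subloop of `L`: a subset containing the identity and closed under
multiplication and both divisions. -/
structure IsSubloop (N : Set L) : Prop where
  one_mem : (1 : L) ∈ N
  mul_mem : ∀ a ∈ N, ∀ b ∈ N, a * b ∈ N
  ldiv_mem : ∀ a ∈ N, ∀ b ∈ N, ldivL a b ∈ N
  rdiv_mem : ∀ a ∈ N, ∀ b ∈ N, rdivL b a ∈ N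

/-- A normal subloop: `xN = Nx`, `(xN)y = x(Ny)` and `x(yN) = (xy)N` for all `x, y`. -/
def IsNormalSubloop (N : Set L) : Prop :=
  IsSubloop N ∧ ∀ x y : L,
    ({x} : Set L) * N = N * {x} ∧
    (({x} : Set L) * N) * {y} = ({x} : Set L) * (N * {y}) ∧
    ({x} : Set L) * (({y} : Set L) * N) = (({x} : Set L) * {y}) * N

/-- `z` is central modulo the normal subloop `N` (i.e. its class is central in `L/N`). -/
def CentralMod (N : Set L) (z : L) : Prop :=
  ∀ x y : L,
    ({z * x * y} : Set L) * N = ({z * (x * y)} : Set L) * N ∧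
    ({x * (y * z)} : Set L) * N = ({x * y * z} : Set L) * N ∧
    ({x * z * y} : Set L) * N = ({x * (z * y)} : Set L) * N ∧
    ({z * x} : Set L) * N = ({x * z} : Set L) * N

/-- `L` is centrally nilpotent of class at most `n`: there is an ascending central
series of normal subloops from `{1}` to `L` of length `n`. -/
def CentrallyNilpotentOfClassLe (L : Type*) [LoopStr L] (n : ℕ) : Prop :=
  ∃ c : ℕ → Set L, c 0 = {1} ∧ (∀ i, c i ⊆ c (i + 1)) ∧
    (∀ i, IsNormalSubloop (c i)) ∧
    (∀ i, ∀ z ∈ c (i + 1), CentralMod (c i) z) ∧ c n = Set.univ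

section Aux

variable {L : Type*} [LoopStr L]

lemma leftT_mem (a : L) : leftT a ∈ MultL L :=
  Subgroup.subset_closure ⟨a, Or.inl rfl⟩

lemma rightT_mem (a : L) : rightT a ∈ MultL L :=
  Subgroup.subset_closure ⟨a, Or.inr rfl⟩

lemma leftT_apply (a y : L) : leftT a y = a * y := rfl
lemma rightT_apply (a y : L) : rightT a y = y * a := rfl

/-- The orbit of `p` under the `i`-th upper central series term of `Mult(L)`. -/
noncomputable def osL (L : Type*) [LoopStr L] (i : ℕ) (p : L) : Set L :=
  { b | ∃ g : MultL L, g ∈ upperCentralSeries (MultL L) i ∧ (g : Equiv.Perm L) p = b }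

lemma mem_osL_self (i : ℕ) (p : L) : p ∈ osL L i p :=
  ⟨1, Subgroup.one_mem _, by simp⟩

lemma osL_map (i : ℕ) {t : Equiv.Perm L} (ht : t ∈ MultL L) (p : L) :
    osL L i (t p) = t '' osL L i p := by
  have hnorm : (upperCentralSeries (MultL L) i).Normal := (inferInstance : (Subgroup.upperCentralSeries (MultL L) i).Normal)
  set T : MultL L := ⟨t, ht⟩ with hT
  ext b
  constructor
  · rintro ⟨g, hg, rfl⟩
    refine ⟨((T⁻¹ * g * T : MultL L) : Equiv.Perm L) p, ⟨T⁻¹ * g * T, ?_, rfl⟩, ?_⟩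
    · have := hnorm.conj_mem g hg T⁻¹
      simpa using this
    · simp [Equiv.Perm.mul_apply, hT]
  · rintro ⟨_, ⟨g, hg, rfl⟩, rfl⟩
    refine ⟨T * g * T⁻¹, hnorm.conj_mem g hg T, ?_⟩
    simp [Equiv.Perm.mul_apply, hT]

lemma osL_smul (i : ℕ) {g : MultL L} (hg : g ∈ upperCentralSeries (MultL L) i) (p : L) :
    osL L i ((g : Equiv.Perm L) p) = osL L i p := by
  ext b
  constructor
  · rintro ⟨a, ha, rfl⟩
    exact ⟨a * g, Subgroup.mul_mem _ ha hg, by simp [Equiv.Perm.mul_apply]⟩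
  · rintro ⟨a, ha, rfl⟩
    refine ⟨a * g⁻¹, Subgroup.mul_mem _ ha (Subgroup.inv_mem _ hg), ?_⟩
    simp [Equiv.Perm.mul_apply]

lemma singleton_mul_osL (i : ℕ) (x p : L) :
    ({x} : Set L) * osL L i p = osL L i (x * p) := by
  have h1 : ({x} : Set L) * osL L i p = (leftT x : Equiv.Perm L) '' osL L i p := by
    rw [Set.singleton_mul]; rfl
  rw [h1, ← osL_map i (leftT_mem x) p, leftT_apply]

lemma osL_mul_singleton (i : ℕ) (x p : L) :
    osL L i p * ({x} : Set L) = osL L i (p * x) := by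
  have h1 : osL L i p * ({x} : Set L) = (rightT x : Equiv.Perm L) '' osL L i p := by
    rw [Set.mul_singleton]; rfl
  rw [h1, ← osL_map i (rightT_mem x) p, rightT_apply]

/-- Master commutation lemma: for `g` in the `(i+1)`-st upper central series term and
`t` in `Mult(L)`, the `i`-orbits of `t(g(1))` and `g(t(1))` agree. -/
lemma osL_comm (i : ℕ) {g : MultL L} (hg : g ∈ upperCentralSeries (MultL L) (i + 1))
    {t : Equiv.Perm L} (ht : t ∈ MultL L) :
    osL L i (t ((g : Equiv.Perm L) 1)) = osL L i ((g : Equiv.Perm L) (t 1)) := by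
  set T : MultL L := ⟨t, ht⟩ with hT
  have hd : g * T * g⁻¹ * T⁻¹ ∈ upperCentralSeries (MultL L) i :=
    mem_upperCentralSeries_succ_iff.mp hg T
  have key : T * g = (g * T * g⁻¹ * T⁻¹)⁻¹ * (g * T) := by group
  have h1 : t ((g : Equiv.Perm L) 1) = ((T * g : MultL L) : Equiv.Perm L) 1 := by
    simp [Equiv.Perm.mul_apply, hT]
  have h2 : (g : Equiv.Perm L) (t 1) = ((g * T : MultL L) : Equiv.Perm L) 1 := by
    simp [Equiv.Perm.mul_apply, hT]
  rw [h1, h2, key]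
  have : (((g * T * g⁻¹ * T⁻¹)⁻¹ * (g * T) : MultL L) : Equiv.Perm L) 1 =
      (((g * T * g⁻¹ * T⁻¹)⁻¹ : MultL L) : Equiv.Perm L) (((g * T : MultL L) : Equiv.Perm L) 1) := by
    simp [Equiv.Perm.mul_apply]
  rw [this, osL_smul i (Subgroup.inv_mem _ hd)]

end Aux

theorem nilpotent_mult_implies_centrally_nilpotent (n : ℕ)
    [Group.IsNilpotent (MultL L)] (h : Group.nilpotencyClass (MultL L) = n) :
    CentrallyNilpotentOfClassLe L n := by
  refine ⟨fun i => osL L i 1, ?_, ?_, ?_, ?_, ?_⟩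
  · -- c 0 = {1}
    ext b
    constructor
    · rintro ⟨g, hg, rfl⟩
      rw [show upperCentralSeries (MultL L) 0 = ⊥ from rfl, Subgroup.mem_bot] at hg
      subst hg; simp
    · rintro rfl; exact mem_osL_self 0 1
  · -- monotone
    rintro i b ⟨g, hg, rfl⟩
    exact ⟨g, upperCentralSeries_mono _ (Nat.le_succ i) hg, rfl⟩
  · -- normal subloop
    intro i
    constructor
    · constructor
      · exact mem_osL_self i 1
      · intro a ha b hb
        obtain ⟨g, hg, rfl⟩ := ha
        have h1 : (g : Equiv.Perm L) 1 * b ∈ ({(g : Equiv.Perm L) 1} : Set L) * osL L i 1 :=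
          Set.mul_mem_mul rfl hb
        rwa [singleton_mul_osL, LoopStr.mul_one, osL_smul i hg] at h1
      · intro a ha b hb
        set y := ldivL a b with hy
        have hspec : a * y = b := (LoopStr.existsUnique_ldiv a b).choose_spec.1
        obtain ⟨gb, hgb, hb'⟩ := hb
        have h1 : (leftT a : Equiv.Perm L) '' osL L i y = osL L i 1 := by
          rw [← osL_map i (leftT_mem a) y, leftT_apply, hspec, ← hb', osL_smul i hgb]
        have h2 : (leftT a : Equiv.Perm L) '' osL L i 1 = osL L i 1 := by
          obtain ⟨ga, hga, ha'⟩ := ha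
          rw [← osL_map i (leftT_mem a) 1, leftT_apply, LoopStr.mul_one, ← ha', osL_smul i hga]
        have h3 : osL L i y = osL L i 1 :=
          Set.image_injective.mpr (leftT a).injective (h1.trans h2.symm)
        show y ∈ osL L i 1; exact h3 ▸ mem_osL_self i y
      · intro a ha b hb
        set y := rdivL b a with hy
        have hspec : y * a = b := (LoopStr.existsUnique_rdiv a b).choose_spec.1
        obtain ⟨gb, hgb, hb'⟩ := hb
        have h1 : (rightT a : Equiv.Perm L) '' osL L i y = osL L i 1 := by
          rw [← osL_map i (rightT_mem a) y, rightT_apply, hspec, ← hb', osL_smul i hgb]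
        have h2 : (rightT a : Equiv.Perm L) '' osL L i 1 = osL L i 1 := by
          obtain ⟨ga, hga, ha'⟩ := ha
          rw [← osL_map i (rightT_mem a) 1, rightT_apply, LoopStr.one_mul, ← ha', osL_smul i hga]
        have h3 : osL L i y = osL L i 1 :=
          Set.image_injective.mpr (rightT a).injective (h1.trans h2.symm)
        show y ∈ osL L i 1; exact h3 ▸ mem_osL_self i y
    · intro x y
      refine ⟨?_, ?_, ?_⟩ <;>
        simp only [Set.singleton_mul_singleton, singleton_mul_osL, osL_mul_singleton,
          LoopStr.mul_one, LoopStr.one_mul]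
  · -- centrality
    rintro i z ⟨g, hg, rfl⟩ x y
    have key : ∀ (t : Equiv.Perm L), t ∈ MultL L →
        osL L i (t ((g : Equiv.Perm L) 1)) = osL L i ((g : Equiv.Perm L) (t 1)) :=
      fun t ht => osL_comm i hg ht
    refine ⟨?_, ?_, ?_, ?_⟩ <;>
      simp only [singleton_mul_osL, LoopStr.mul_one]
    · have e1 : (g : Equiv.Perm L) 1 * x * y = (rightT y * rightT x) ((g : Equiv.Perm L) 1) := rfl
      have e2 : (g : Equiv.Perm L) 1 * (x * y) = rightT (x * y) ((g : Equiv.Perm L) 1) := rfl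
      rw [e1, e2, key _ (Subgroup.mul_mem _ (rightT_mem y) (rightT_mem x)),
        key _ (rightT_mem (x * y))]
      have e3 : (rightT y * rightT x : Equiv.Perm L) 1 = (rightT (x * y) : Equiv.Perm L) 1 := by
        show 1 * x * y = 1 * (x * y)
        rw [LoopStr.one_mul, LoopStr.one_mul]
      rw [e3]
    · have e1 : x * (y * (g : Equiv.Perm L) 1) = (leftT x * leftT y) ((g : Equiv.Perm L) 1) := rfl
      have e2 : x * y * (g : Equiv.Perm L) 1 = leftT (x * y) ((g : Equiv.Perm L) 1) := rfl
      rw [e1, e2, key _ (Subgroup.mul_mem _ (leftT_mem x) (leftT_mem y)),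
        key _ (leftT_mem (x * y))]
      have e3 : (leftT x * leftT y : Equiv.Perm L) 1 = (leftT (x * y) : Equiv.Perm L) 1 := by
        show x * (y * 1) = x * y * 1
        rw [LoopStr.mul_one, LoopStr.mul_one]
      rw [e3]
    · have e1 : x * (g : Equiv.Perm L) 1 * y = (rightT y * leftT x) ((g : Equiv.Perm L) 1) := rfl
      have e2 : x * ((g : Equiv.Perm L) 1 * y) = (leftT x * rightT y) ((g : Equiv.Perm L) 1) := rfl
      rw [e1, e2, key _ (Subgroup.mul_mem _ (rightT_mem y) (leftT_mem x)),
        key _ (Subgroup.mul_mem _ (leftT_mem x) (rightT_mem y))]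
      have e3 : (rightT y * leftT x : Equiv.Perm L) 1 = (leftT x * rightT y : Equiv.Perm L) 1 := by
        show x * 1 * y = x * (1 * y)
        rw [LoopStr.mul_one, LoopStr.one_mul]
      rw [e3]
    · have e1 : (g : Equiv.Perm L) 1 * x = rightT x ((g : Equiv.Perm L) 1) := rfl
      have e2 : x * (g : Equiv.Perm L) 1 = leftT x ((g : Equiv.Perm L) 1) := rfl
      rw [e1, e2, key _ (rightT_mem x), key _ (leftT_mem x)]
      have e3 : (rightT x : Equiv.Perm L) 1 = (leftT x : Equiv.Perm L) 1 := by
        show 1 * x = x * 1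
        rw [LoopStr.one_mul, LoopStr.mul_one]
      rw [e3]
  · -- c n = univ
    have htop : upperCentralSeries (MultL L) n = ⊤ := by
      rw [← h]; exact upperCentralSeries_nilpotencyClass
    ext b
    simp only [Set.mem_univ, iff_true]
    refine ⟨⟨leftT b, leftT_mem b⟩, by rw [htop]; trivial, ?_⟩
    show b * 1 = b
    exact LoopStr.mul_one b
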